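/- Let e ≥ 1 be an integer, let k = 4 and n = 2^{2e-1}, so that the deck has kn = 2^{2e+1} cards. Then the shuffle group G_{4, 2^{2e+1}} is isomorphic, as an abstract group, to the affine group of the (2e+1)-dimensional vector space over the field of two elements, i.e., to the group of invertible affine transformations of (ZMod 2)^{2e+1} (equivalently, to the semidirect product (ZMod 2)^{2e+1} ⋊ GL(2e+1, 2) with the natural action). -/

import Mathlib

lemma shuffleAux.div_lt (k n : ℕ) (x : Fin (k * n)) : (x : ℕ) / n < k := by
  have hx := x.isLt
  have hn : 0 < n := by
    rcases Nat.eq_zero_or_pos n with rfl | h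
    · simp at hx
    · exact h
  exact (Nat.div_lt_iff_lt_mul hn).mpr hx

lemma shuffleAux.mod_lt (k n : ℕ) (x : Fin (k * n)) : (x : ℕ) % n < n := by
  have hx := x.isLt
  have hn : 0 < n := by
    rcases Nat.eq_zero_or_pos n with rfl | h
    · simp at hx
    · exact h
  exact Nat.mod_lt _ hn

lemma shuffleAux.bound1 (k n : ℕ) (x : Fin (k * n)) :
    k * ((x : ℕ) % n) + (x : ℕ) / n < k * n := by
  have h1 := shuffleAux.mod_lt k n x
  have h2 := shuffleAux.div_lt k n x
  calc k * ((x : ℕ) % n) + (x : ℕ) / n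
      < k * ((x : ℕ) % n) + k := by omega
    _ = k * ((x : ℕ) % n + 1) := by ring
    _ ≤ k * n := Nat.mul_le_mul_left _ (by omega)

lemma shuffleAux.bound2 (k n : ℕ) (x : Fin (k * n)) (j : Fin k) :
    (x : ℕ) % n + (j : ℕ) * n < k * n := by
  have h1 := shuffleAux.mod_lt k n x
  have h2 := j.isLt
  calc (x : ℕ) % n + (j : ℕ) * n
      < n + (j : ℕ) * n := by omega
    _ = ((j : ℕ) + 1) * n := by ring
    _ ≤ k * n := Nat.mul_le_mul_right _ (by omega)

/-- The standard shuffle `σ` on a deck of `k * n` cards, where the card in position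
`i + j·n` (`i ∈ [n]`, `j ∈ [k]`) is sent to position `k·i + j`; equivalently
`σ(x) = k·(x mod n) + ⌊x / n⌋`. -/
noncomputable def stdShuffle (k n : ℕ) : Equiv.Perm (Fin (k * n)) :=
  Equiv.ofBijective
    (fun x => ⟨k * ((x : ℕ) % n) + (x : ℕ) / n, shuffleAux.bound1 k n x⟩)
    (Finite.injective_iff_bijective.mp (by
      intro x y hxy
      simp only [Fin.mk.injEq] at hxy
      have hk : 0 < k := lt_of_le_of_lt (Nat.zero_le _) (shuffleAux.div_lt k n x)
      have key : ∀ z : Fin (k * n),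
          (k * ((z : ℕ) % n) + (z : ℕ) / n) % k = (z : ℕ) / n ∧
          (k * ((z : ℕ) % n) + (z : ℕ) / n) / k = (z : ℕ) % n := by
        intro z
        have hz := shuffleAux.div_lt k n z
        constructor
        · rw [Nat.mul_add_mod, Nat.mod_eq_of_lt hz]
        · rw [Nat.mul_add_div hk, Nat.div_eq_of_lt hz, Nat.add_zero]
      obtain ⟨h1x, h2x⟩ := key x
      obtain ⟨h1y, h2y⟩ := key y
      rw [hxy] at h1x h2x
      have hd : (x : ℕ) / n = (y : ℕ) / n := by omega
      have hm : (x : ℕ) % n = (y : ℕ) % n := by omega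
      apply Fin.ext
      rw [← Nat.div_add_mod (x : ℕ) n, ← Nat.div_add_mod (y : ℕ) n, hd, hm]))

/-- The permutation `ρ_τ` induced by a permutation `τ` of the `k` piles:
`ρ_τ(i + j·n) = i + τ(j)·n` for `i ∈ [n]`, `j ∈ [k]`. -/
noncomputable def pilePerm (k n : ℕ) (τ : Equiv.Perm (Fin k)) : Equiv.Perm (Fin (k * n)) :=
  Equiv.ofBijective
    (fun x => ⟨(x : ℕ) % n + ((τ ⟨(x : ℕ) / n, shuffleAux.div_lt k n x⟩ : Fin k) : ℕ) * n,
      shuffleAux.bound2 k n x _⟩)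
    (Finite.injective_iff_bijective.mp (by
      intro x y hxy
      simp only [Fin.mk.injEq] at hxy
      have hn : 0 < n := lt_of_le_of_lt (Nat.zero_le _) (shuffleAux.mod_lt k n x)
      have key : ∀ z : Fin (k * n),
          ((z : ℕ) % n + ((τ ⟨(z : ℕ) / n, shuffleAux.div_lt k n z⟩ : Fin k) : ℕ) * n) % n
            = (z : ℕ) % n ∧
          ((z : ℕ) % n + ((τ ⟨(z : ℕ) / n, shuffleAux.div_lt k n z⟩ : Fin k) : ℕ) * n) / n
            = ((τ ⟨(z : ℕ) / n, shuffleAux.div_lt k n z⟩ : Fin k) : ℕ) := by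
        intro z
        have h1 := shuffleAux.mod_lt k n z
        constructor
        · rw [Nat.add_mul_mod_self_right, Nat.mod_eq_of_lt h1]
        · rw [Nat.add_mul_div_right _ _ hn, Nat.div_eq_of_lt h1, Nat.zero_add]
      obtain ⟨h1x, h2x⟩ := key x
      obtain ⟨h1y, h2y⟩ := key y
      rw [hxy] at h1x h2x
      have hm : (x : ℕ) % n = (y : ℕ) % n := by omega
      have hv : ((τ ⟨(x : ℕ) / n, shuffleAux.div_lt k n x⟩ : Fin k) : ℕ)
          = ((τ ⟨(y : ℕ) / n, shuffleAux.div_lt k n y⟩ : Fin k) : ℕ) := by omega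
      have hτ : (⟨(x : ℕ) / n, shuffleAux.div_lt k n x⟩ : Fin k)
          = ⟨(y : ℕ) / n, shuffleAux.div_lt k n y⟩ := τ.injective (Fin.ext hv)
      have hd : (x : ℕ) / n = (y : ℕ) / n := congrArg Fin.val hτ
      apply Fin.ext
      rw [← Nat.div_add_mod (x : ℕ) n, ← Nat.div_add_mod (y : ℕ) n, hd, hm]))

/-- The shuffle group `G_{k,kn}`, generated by the standard shuffle `σ` together with
the pile permutations `ρ_τ` for all `τ ∈ Sym([k])`. -/
noncomputable def shuffleGroup (k n : ℕ) : Subgroup (Equiv.Perm (Fin (k * n))) :=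
  Subgroup.closure ({stdShuffle k n} ∪ Set.range (pilePerm k n))

namespace ShuffleProof

abbrev F : Type := ZMod 2

-- index type: m = 2e+3 cards' bit positions
abbrev I (e : ℕ) : Type := ZMod (2*e+3)

instance (e : ℕ) : NeZero (2*e+3) := ⟨by omega⟩

abbrev V (e : ℕ) : Type := I e → F

/-- coding of a pair of bits as an element of `Fin 4`. -/
def pairToFin (p : F × F) : Fin 4 :=
  ⟨p.1.val + 2 * p.2.val, by have h1 := p.1.val_lt; have h2 := p.2.val_lt; omega⟩

def finToPair (j : Fin 4) : F × F := (((j.val % 2 : ℕ) : F), ((j.val / 2 : ℕ) : F))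

def f4 (τ : Equiv.Perm (Fin 4)) (p : F × F) : F × F := finToPair (τ (pairToFin p))

def ell (τ : Equiv.Perm (Fin 4)) (p : F × F) : F × F := f4 τ p + f4 τ 0

lemma pf_rt : ∀ p, finToPair (pairToFin p) = p := by decide
lemma fp_rt : ∀ j, pairToFin (finToPair j) = j := by decide
lemma ell_add : ∀ τ p q, ell τ (p + q) = ell τ p + ell τ q := by decide
lemma f4_affine : ∀ τ p q, f4 τ (p + q) = ell τ p + f4 τ q := by decide
lemma ell_inv : ∀ τ p, ell τ (ell τ⁻¹ p) = p := by decide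

def τA : Equiv.Perm (Fin 4) := Equiv.swap 0 1 * Equiv.swap 2 3
def τB : Equiv.Perm (Fin 4) := Equiv.swap 0 2 * Equiv.swap 1 3
def τT1 : Equiv.Perm (Fin 4) := Equiv.swap 1 3
def τT2 : Equiv.Perm (Fin 4) := Equiv.swap 2 3

lemma f4_τA : ∀ p, f4 τA p = p + (1, 0) := by decide
lemma f4_τB : ∀ p, f4 τB p = p + (0, 1) := by decide
lemma f4_τT1 : ∀ p, f4 τT1 p = (p.1, p.2 + p.1) := by decide
lemma f4_τT2 : ∀ p, f4 τT2 p = (p.1 + p.2, p.2) := by decide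

lemma F_cases : ∀ c : F, c = 0 ∨ c = 1 := by decide
lemma F_add_self : ∀ c : F, c + c = 0 := by decide

end ShuffleProof

namespace ShuffleProof

variable {e : ℕ}

lemma valI_inj {i j : I e} (h : i.val = j.val) : i = j := by
  have hi := ZMod.natCast_rightInverse (n := 2*e+3) i
  have hj := ZMod.natCast_rightInverse (n := 2*e+3) j
  rw [← hi, ← hj, h]

lemma natCast_I_val (t : ℕ) (ht : t < 2*e+3) : ((t : ℕ) : I e).val = t :=
  ZMod.val_cast_of_lt ht

lemma val_topA : (-2 : I e).val = 2*e+1 := by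
  have h : ((2*e+1 : ℕ) : I e) = -2 := by
    have h0 : ((2*e+3 : ℕ) : I e) = 0 := ZMod.natCast_self _
    push_cast at h0 ⊢
    linear_combination h0
  rw [← h, natCast_I_val _ (by omega)]

lemma val_topB : (-1 : I e).val = 2*e+2 := by
  have h : ((2*e+2 : ℕ) : I e) = -1 := by
    have h0 : ((2*e+3 : ℕ) : I e) = 0 := ZMod.natCast_self _
    push_cast at h0 ⊢
    linear_combination h0
  rw [← h, natCast_I_val _ (by omega)]

lemma topA_ne_topB : (-2 : I e) ≠ -1 := by
  intro h
  have := congrArg ZMod.val h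
  rw [val_topA, val_topB] at this
  omega

lemma I_trichotomy (i : I e) : i.val < 2*e+1 ∨ i = -2 ∨ i = -1 := by
  have h := ZMod.val_lt i
  rcases Nat.lt_or_ge i.val (2*e+1) with h1 | h1
  · exact Or.inl h1
  · rcases Nat.lt_or_ge i.val (2*e+2) with h2 | h2
    · exact Or.inr (Or.inl (valI_inj (by rw [val_topA]; omega)))
    · exact Or.inr (Or.inr (valI_inj (by rw [val_topB]; omega)))

lemma low_ne_topA {i : I e} (h : i.val < 2*e+1) : i ≠ -2 := by
  intro hh; rw [hh, val_topA] at h; omega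

lemma low_ne_topB {i : I e} (h : i.val < 2*e+1) : i ≠ -1 := by
  intro hh; rw [hh, val_topB] at h; omega

/-! ### setTop and the affine maps induced by pile permutations -/

def setTop (p : F × F) (v : V e) : V e := fun i =>
  if i = -2 then p.1 else if i = -1 then p.2 else v i

def topOf (v : V e) : F × F := (v (-2), v (-1))

@[simp] lemma setTop_topA (p : F × F) (v : V e) : setTop p v (-2) = p.1 := by
  simp [setTop]

@[simp] lemma setTop_topB (p : F × F) (v : V e) : setTop p v (-1) = p.2 := by
  simp [setTop, topA_ne_topB.symm]

lemma setTop_low (p : F × F) (v : V e) {i : I e} (h1 : i ≠ -2) (h2 : i ≠ -1) :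
    setTop p v i = v i := by simp [setTop, h1, h2]

@[simp] lemma top_setTop (p : F × F) (v : V e) : topOf (setTop p v) = p := by
  simp [topOf]

lemma setTop_setTop (p q : F × F) (v : V e) : setTop p (setTop q v) = setTop p v := by
  funext i; by_cases h1 : i = -2 <;> by_cases h2 : i = -1 <;> simp [setTop, h1, h2]

lemma neg_one_ne_neg_two : (-1 : I e) ≠ -2 := Ne.symm topA_ne_topB

lemma one_ne_two_I : (1 : I e) ≠ 2 := by
  intro h
  have h1 : (1 : I e).val = 1 := by rw [← Nat.cast_one]; exact natCast_I_val 1 (by omega)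
  have h2 : (2 : I e).val = 2 := by
    have h3 : ((2:ℕ) : I e).val = 2 := natCast_I_val 2 (by omega)
    simpa using h3
  rw [h] at h1
  omega

lemma setTop_add (p q : F × F) (v w : V e) :
    setTop p v + setTop q w = setTop (p + q) (v + w) := by
  funext i
  by_cases h1 : i = -2 <;> by_cases h2 : i = -1 <;>
    simp [setTop, h1, h2, topA_ne_topB, neg_one_ne_neg_two, one_ne_two_I]

lemma top_add (v w : V e) : topOf (v + w) = topOf v + topOf w := rfl

lemma setTop_top (v : V e) : setTop (topOf v) v = v := by
  funext i
  by_cases h1 : i = -2 <;> by_cases h2 : i = -1 <;>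
    simp [setTop, topOf, h1, h2, topA_ne_topB, neg_one_ne_neg_two, one_ne_two_I]

def gmap (τ : Equiv.Perm (Fin 4)) (v : V e) : V e := setTop (f4 τ (topOf v)) v

def glin (τ : Equiv.Perm (Fin 4)) (v : V e) : V e := setTop (ell τ (topOf v)) v

lemma f4_f4 (τ τ' : Equiv.Perm (Fin 4)) (p : F × F) : f4 τ (f4 τ' p) = f4 (τ * τ') p := by
  simp [f4, fp_rt, Equiv.Perm.mul_apply]

lemma gmap_gmap (τ τ' : Equiv.Perm (Fin 4)) (v : V e) :
    gmap τ (gmap τ' v) = gmap (τ * τ') v := by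
  simp [gmap, setTop_setTop, f4_f4]

lemma f4_one (p : F × F) : f4 1 p = p := by
  simp [f4, pf_rt]

lemma gmap_one (v : V e) : gmap 1 v = v := by
  simp [gmap, f4_one, setTop_top]

/-- A map on `V e` which is additive is `ZMod 2`-linear. -/
def mkLinearOfAdd (f : V e → V e) (h : ∀ x y, f (x + y) = f x + f y) : V e →ₗ[F] V e where
  toFun := f
  map_add' := h
  map_smul' := by
    have h0 : f 0 = 0 := by
      have h2 := h 0 0
      rw [add_zero] at h2
      exact (add_left_cancel (show f 0 + f 0 = f 0 + 0 by rw [add_zero, ← h2])).symm ▸ rfl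
    intro c x
    rcases F_cases c with rfl | rfl
    · simp [h0]
    · simp

lemma glin_add (τ : Equiv.Perm (Fin 4)) (x y : V e) :
    glin τ (x + y) = glin τ x + glin τ y := by
  simp [glin, top_add, ell_add, setTop_add]

lemma glin_glin (τ τ' : Equiv.Perm (Fin 4)) (v : V e) :
    glin τ (glin τ' v) = setTop (ell τ (ell τ' (topOf v))) v := by
  simp [glin, setTop_setTop]

def glinMap (τ : Equiv.Perm (Fin 4)) : V e →ₗ[F] V e :=
  mkLinearOfAdd (glin τ) (glin_add τ)

lemma ell_inv' (τ : Equiv.Perm (Fin 4)) (p : F × F) : ell τ⁻¹ (ell τ p) = p := by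
  have := ell_inv τ⁻¹ p
  rwa [inv_inv] at this

def glinEquiv (τ : Equiv.Perm (Fin 4)) : V e ≃ₗ[F] V e :=
  LinearEquiv.ofLinear (glinMap τ) (glinMap τ⁻¹)
    (by ext v; simp [glinMap, mkLinearOfAdd, glin_glin, ell_inv, setTop_top])
    (by ext v; simp [glinMap, mkLinearOfAdd, glin_glin, ell_inv', setTop_top])

/-- The affine equivalence of `V e` induced by a pile permutation. -/
def gaff (τ : Equiv.Perm (Fin 4)) : V e ≃ᵃ[F] V e where
  toFun := gmap τ
  invFun := gmap τ⁻¹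
  left_inv := fun v => by rw [gmap_gmap, inv_mul_cancel, gmap_one]
  right_inv := fun v => by rw [gmap_gmap, mul_inv_cancel, gmap_one]
  linear := glinEquiv τ
  map_vadd' := by
    intro p v
    show gmap τ (v + p) = glin τ v + gmap τ p
    simp [gmap, glin, top_add, f4_affine, setTop_add]

@[simp] lemma gaff_apply (τ : Equiv.Perm (Fin 4)) (v : V e) : gaff τ v = gmap τ v := rfl

@[simp] lemma gaff_linear (τ : Equiv.Perm (Fin 4)) : (gaff (e := e) τ).linear = glinEquiv τ := rfl

end ShuffleProof

namespace ShuffleProof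

variable {e : ℕ}

/-! ### rotation and transvections -/

/-- Rotation of coordinates: `(rlin v) i = v (i - 2)`. -/
def rlin (e : ℕ) : V e ≃ₗ[F] V e := LinearEquiv.funCongrLeft F F (Equiv.subRight (2 : I e))

@[simp] lemma rlin_apply (v : V e) (i : I e) : rlin e v i = v (i - 2) := rfl

@[simp] lemma rlin_symm_apply (v : V e) (i : I e) : (rlin e).symm v i = v (i + 2) := by
  have h := congrFun (((rlin e).apply_symm_apply v)) (i + 2)
  rw [rlin_apply, add_sub_cancel_right] at h
  exact h

def tmap (a b : I e) (v : V e) : V e := fun i => if i = b then v i + v a else v i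

lemma tmap_add (a b : I e) (x y : V e) : tmap a b (x + y) = tmap a b x + tmap a b y := by
  funext i; by_cases h : i = b <;> simp [tmap, h] <;> abel

lemma tmap_apply_self (a b : I e) (v : V e) : tmap a b v b = v b + v a := by simp [tmap]

lemma tmap_apply_ne (a b : I e) (v : V e) {i : I e} (hi : i ≠ b) : tmap a b v i = v i := by
  simp [tmap, hi]

lemma tmap_invol (a b : I e) (h : a ≠ b) (v : V e) : tmap a b (tmap a b v) = v := by
  funext i
  by_cases hib : i = b
  · subst hib
    rw [tmap_apply_self, tmap_apply_self, tmap_apply_ne _ _ v h, add_assoc, F_add_self, add_zero]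
  · rw [tmap_apply_ne _ _ _ hib, tmap_apply_ne _ _ _ hib]

def tl (a b : I e) (h : a ≠ b) : V e ≃ₗ[F] V e :=
  LinearEquiv.ofLinear (mkLinearOfAdd (tmap a b) (tmap_add a b))
    (mkLinearOfAdd (tmap a b) (tmap_add a b))
    (LinearMap.ext fun v => tmap_invol a b h v)
    (LinearMap.ext fun v => tmap_invol a b h v)

@[simp] lemma tl_apply (a b : I e) (h : a ≠ b) (v : V e) : tl a b h v = tmap a b v := rfl

lemma tl_congr {a b a' b' : I e} (h : a ≠ b) (ha : a = a') (hb : b = b') :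
    tl a b h = tl a' b' (ha ▸ hb ▸ h) := by subst ha; subst hb; rfl

end ShuffleProof

namespace ShuffleProof

variable {e : ℕ}

/-! ### the groups -/

abbrev AG (e : ℕ) : Type := V e ≃ᵃ[F] V e

def Raff (e : ℕ) : AG e := (rlin e).toAffineEquiv

/-- generators on the affine side -/
def Tset (e : ℕ) : Set (AG e) := {Raff e} ∪ Set.range (gaff (e := e))

def Hgrp (e : ℕ) : Subgroup (AG e) := Subgroup.closure (Tset e)

def linToAff (e : ℕ) : (V e ≃ₗ[F] V e) →* AG e :=
  MonoidHom.mk' LinearEquiv.toAffineEquiv (fun _ _ => rfl)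

@[simp] lemma linToAff_apply (σ : V e ≃ₗ[F] V e) (v : V e) : linToAff e σ v = σ v := rfl

lemma Raff_mem : Raff e ∈ Hgrp e := Subgroup.subset_closure (Or.inl rfl)

lemma gaff_mem (τ : Equiv.Perm (Fin 4)) : gaff (e := e) τ ∈ Hgrp e :=
  Subgroup.subset_closure (Or.inr ⟨τ, rfl⟩)

lemma conj_constVAdd (σ : V e ≃ₗ[F] V e) (w : V e) :
    linToAff e σ * AffineEquiv.constVAdd F (V e) w * (linToAff e σ)⁻¹ =
      AffineEquiv.constVAdd F (V e) (σ w) := by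
  apply AffineEquiv.toEquiv_injective
  apply Equiv.ext
  intro v
  show σ (w + σ.symm v) = σ w + v
  rw [map_add, σ.apply_symm_apply]

lemma conj_mem_H {f : AG e} (hf : f ∈ Hgrp e) : Raff e * f * (Raff e)⁻¹ ∈ Hgrp e :=
  mul_mem (mul_mem Raff_mem hf) (inv_mem Raff_mem)

lemma Raff_eq : Raff e = linToAff e (rlin e) := rfl

/-- vectors whose translations lie in `Hgrp`. -/
def A1 (e : ℕ) : AddSubgroup (V e) where
  carrier := {w | AffineEquiv.constVAdd F (V e) w ∈ Hgrp e}
  zero_mem' := by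
    have : AffineEquiv.constVAdd F (V e) 0 = 1 := by
      apply AffineEquiv.toEquiv_injective; apply Equiv.ext; intro v
      show (0 : V e) + v = v
      rw [zero_add]
    simp only [Set.mem_setOf_eq, this]
    exact one_mem _
  add_mem' := by
    intro a b ha hb
    have : AffineEquiv.constVAdd F (V e) (a + b) =
        AffineEquiv.constVAdd F (V e) a * AffineEquiv.constVAdd F (V e) b := by
      apply AffineEquiv.toEquiv_injective; apply Equiv.ext; intro v
      show (a + b) + v = a + (b + v)
      rw [add_assoc]
    simp only [Set.mem_setOf_eq] at *
    rw [this]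
    exact mul_mem ha hb
  neg_mem' := by
    intro a ha
    have : AffineEquiv.constVAdd F (V e) (-a) = (AffineEquiv.constVAdd F (V e) a)⁻¹ := by
      rw [← AffineEquiv.constVAdd_symm]; rfl
    simp only [Set.mem_setOf_eq] at *
    rw [this]
    exact inv_mem ha

lemma A1_rot {w : V e} (h : w ∈ A1 e) : rlin e w ∈ A1 e := by
  have := conj_mem_H (f := AffineEquiv.constVAdd F (V e) w) h
  rwa [Raff_eq, conj_constVAdd] at this

lemma single_shift (a : I e) (c : F) :
    rlin e (Pi.single a c) = Pi.single (a + 2) c := by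
  funext i
  rw [rlin_apply, Pi.single_apply, Pi.single_apply]
  congr 1
  simp only [eq_iff_iff]
  constructor
  · intro h; rw [← h]; ring
  · intro h; rw [h]; ring

lemma two_nat_surj (y : I e) : ∃ t : ℕ, ((2 * t : ℕ) : I e) = y := by
  refine ⟨(e + 2) * y.val, ?_⟩
  have h0 : ((2*e+3 : ℕ) : I e) = 0 := ZMod.natCast_self _
  have hy : ((y.val : ℕ) : I e) = y := ZMod.natCast_rightInverse y
  push_cast at h0 hy ⊢
  linear_combination (y.val : I e) * h0 + hy

lemma single_base_A : Pi.single (-2 : I e) (1 : F) ∈ A1 e := by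
  have hid : gaff (e := e) τA = AffineEquiv.constVAdd F (V e) (Pi.single (-2 : I e) 1) := by
    apply AffineEquiv.toEquiv_injective; apply Equiv.ext; intro v
    show gmap τA v = Pi.single (-2 : I e) 1 + v
    funext i
    rcases I_trichotomy i with h | h | h
    · rw [Pi.add_apply, Pi.single_apply, if_neg (low_ne_topA h), zero_add]
      exact setTop_low _ _ (low_ne_topA h) (low_ne_topB h)
    · subst h
      rw [gmap, setTop_topA, f4_τA, Pi.add_apply, Pi.single_apply, if_pos rfl]
      show (topOf v).1 + 1 = 1 + v (-2)
      rw [add_comm]; rfl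
    · subst h
      rw [gmap, setTop_topB, f4_τA, Pi.add_apply, Pi.single_apply,
        if_neg neg_one_ne_neg_two, zero_add]
      show (topOf v).2 + 0 = v (-1)
      rw [add_zero]; rfl
  show AffineEquiv.constVAdd F (V e) (Pi.single (-2 : I e) 1) ∈ Hgrp e
  rw [← hid]
  exact gaff_mem τA

lemma single_base_B : Pi.single (-1 : I e) (1 : F) ∈ A1 e := by
  have hid : gaff (e := e) τB = AffineEquiv.constVAdd F (V e) (Pi.single (-1 : I e) 1) := by
    apply AffineEquiv.toEquiv_injective; apply Equiv.ext; intro v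
    show gmap τB v = Pi.single (-1 : I e) 1 + v
    funext i
    rcases I_trichotomy i with h | h | h
    · rw [Pi.add_apply, Pi.single_apply, if_neg (low_ne_topB h), zero_add]
      exact setTop_low _ _ (low_ne_topA h) (low_ne_topB h)
    · subst h
      rw [gmap, setTop_topA, f4_τB, Pi.add_apply, Pi.single_apply, if_neg topA_ne_topB, zero_add]
      show (topOf v).1 + 0 = v (-2)
      rw [add_zero]; rfl
    · subst h
      rw [gmap, setTop_topB, f4_τB, Pi.add_apply, Pi.single_apply, if_pos rfl]
      show (topOf v).2 + 1 = 1 + v (-1)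
      rw [add_comm]; rfl
  show AffineEquiv.constVAdd F (V e) (Pi.single (-1 : I e) 1) ∈ Hgrp e
  rw [← hid]
  exact gaff_mem τB

lemma single_rot_mem (t : ℕ) : Pi.single ((-2 : I e) + (2*t : ℕ)) (1 : F) ∈ A1 e := by
  induction t with
  | zero => simpa using single_base_A
  | succ t ih =>
      have h := A1_rot ih
      rw [single_shift] at h
      have harg : (-2 : I e) + ((2*t : ℕ) : I e) + 2 = (-2 : I e) + ((2*(t+1) : ℕ) : I e) := by
        push_cast; ring
      rwa [harg] at h

lemma single_mem_A1 (a : I e) : Pi.single a (1 : F) ∈ A1 e := by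
  obtain ⟨t, ht⟩ := two_nat_surj (a + 2)
  have h := single_rot_mem (e := e) t
  rw [ht] at h
  have : (-2 : I e) + (a + 2) = a := by ring
  rwa [this] at h

lemma A1_top (w : V e) : w ∈ A1 e := by
  have hw : w = ∑ i : I e, Pi.single i (w i) := (Finset.univ_sum_single w).symm
  rw [hw]
  apply AddSubgroup.sum_mem
  intro i _
  rcases F_cases (w i) with h | h
  · rw [h, Pi.single_zero]
    exact (A1 e).zero_mem
  · rw [h]
    exact single_mem_A1 i

end ShuffleProof

namespace ShuffleProof

variable {e : ℕ}

def K2 (e : ℕ) : Subgroup (V e ≃ₗ[F] V e) := (Hgrp e).comap (linToAff e)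

lemma rlin_mem_K2 : rlin e ∈ K2 e := Raff_mem

lemma conj_K2 {σ : V e ≃ₗ[F] V e} (h : σ ∈ K2 e) :
    rlin e * σ * (rlin e)⁻¹ ∈ K2 e := by
  show linToAff e (rlin e * σ * (rlin e)⁻¹) ∈ Hgrp e
  rw [map_mul, map_mul, map_inv, ← Raff_eq]
  exact conj_mem_H h

lemma F_aux1 : ∀ x y z : F, (x + y) + (y + z) = x + z := by decide
lemma F_aux2 : ∀ x y : F, (x + y) + y = x := by decide

lemma gaff_τT1_eq : gaff (e := e) τT1 = linToAff e (tl (-2) (-1) topA_ne_topB) := by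
  apply AffineEquiv.toEquiv_injective; apply Equiv.ext; intro v
  show gmap τT1 v = tmap (-2) (-1) v
  funext i
  rcases I_trichotomy i with h | h | h
  · rw [gmap, setTop_low _ _ (low_ne_topA h) (low_ne_topB h), tmap_apply_ne _ _ _ (low_ne_topB h)]
  · subst h
    rw [gmap, setTop_topA, f4_τT1, tmap_apply_ne _ _ _ topA_ne_topB]
    rfl
  · subst h
    rw [gmap, setTop_topB, f4_τT1, tmap_apply_self]
    rfl
lemma gaff_τT2_eq : gaff (e := e) τT2 = linToAff e (tl (-1) (-2) neg_one_ne_neg_two) := by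
  apply AffineEquiv.toEquiv_injective; apply Equiv.ext; intro v
  show gmap τT2 v = tmap (-1) (-2) v
  funext i
  rcases I_trichotomy i with h | h | h
  · rw [gmap, setTop_low _ _ (low_ne_topA h) (low_ne_topB h), tmap_apply_ne _ _ _ (low_ne_topA h)]
  · subst h
    rw [gmap, setTop_topA, f4_τT2, tmap_apply_self]
    rfl
  · subst h
    rw [gmap, setTop_topB, f4_τT2, tmap_apply_ne _ _ _ neg_one_ne_neg_two]
    rfl

lemma tl_base1 : tl (-2) (-1) topA_ne_topB ∈ K2 e := by
  show linToAff e _ ∈ Hgrp e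
  rw [← gaff_τT1_eq]
  exact gaff_mem τT1

lemma tl_base2 : tl (-1) (-2) neg_one_ne_neg_two ∈ K2 e := by
  show linToAff e _ ∈ Hgrp e
  rw [← gaff_τT2_eq]
  exact gaff_mem τT2

lemma ne_shift {a b : I e} (c : I e) (h : a ≠ b) : a + c ≠ b + c := by
  intro hh; exact h (by linear_combination hh)

lemma conj_tl (a b : I e) (h : a ≠ b) :
    rlin e * tl a b h * (rlin e)⁻¹ = tl (a+2) (b+2) (ne_shift 2 h) := by
  apply LinearEquiv.toLinearMap_injective
  apply LinearMap.ext
  intro v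
  show rlin e (tmap a b ((rlin e)⁻¹ v)) = tmap (a+2) (b+2) v
  funext i
  rw [rlin_apply]
  by_cases hib : i = b + 2
  · subst hib
    rw [show b + 2 - 2 = b by ring, tmap_apply_self, tmap_apply_self]
    show (rlin e).symm v b + (rlin e).symm v a = _
    rw [rlin_symm_apply, rlin_symm_apply]
  · have hib' : i - 2 ≠ b := fun hh => hib (by linear_combination hh)
    rw [tmap_apply_ne _ _ _ hib', tmap_apply_ne _ _ _ hib]
    show (rlin e).symm v (i - 2) = v i
    rw [rlin_symm_apply, sub_add_cancel]

lemma one_ne_zero_I : (1 : I e) ≠ 0 := by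
  intro h
  have h1 : (1 : I e).val = 1 := by rw [← Nat.cast_one]; exact natCast_I_val 1 (by omega)
  rw [h, ZMod.val_zero] at h1
  omega

lemma self_ne_add_one (a : I e) : a ≠ a + 1 := by
  intro h
  exact one_ne_zero_I (by linear_combination -h)

/-- membership of adjacent transvections, both orders -/
lemma tl_adj (a : I e) :
    (∀ h, tl a (a+1) h ∈ K2 e) ∧ (∀ h, tl (a+1) a h ∈ K2 e) := by
  have key : ∀ t : ℕ, ∀ b : I e, b = -2 + ((2*t : ℕ) : I e) →
      (∀ h, tl b (b+1) h ∈ K2 e) ∧ (∀ h, tl (b+1) b h ∈ K2 e) := by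
    intro t
    induction t with
    | zero =>
        intro b hb
        have hb' : b = -2 := by rw [hb]; push_cast; ring
        subst hb'
        constructor
        · intro h
          rw [tl_congr h rfl (show (-2 : I e) + 1 = -1 by ring)]
          exact tl_base1
        · intro h
          rw [tl_congr h (show (-2 : I e) + 1 = -1 by ring) rfl]
          exact tl_base2
    | succ t ih =>
        intro b hb
        have hb2 : b - 2 = -2 + ((2*t : ℕ) : I e) := by rw [hb]; push_cast; ring
        obtain ⟨ih1, ih2⟩ := ih (b - 2) hb2
        constructor
        · intro h
          have h2 := conj_K2 (ih1 (self_ne_add_one _))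
          rw [conj_tl, tl_congr _ (show b - 2 + 2 = b by ring)
            (show b - 2 + 1 + 2 = b + 1 by ring)] at h2
          exact h2
        · intro h
          have h2 := conj_K2 (ih2 (self_ne_add_one _).symm)
          rw [conj_tl, tl_congr _ (show b - 2 + 1 + 2 = b + 1 by ring)
            (show b - 2 + 2 = b by ring)] at h2
          exact h2
  obtain ⟨t, ht⟩ := two_nat_surj (a + 2)
  exact key t a (by rw [ht]; ring)

end ShuffleProof

namespace ShuffleProof

variable {e : ℕ}

lemma tl_comm {a b c : I e} (hab : a ≠ b) (hbc : b ≠ c) (hac : a ≠ c) :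
    tl a c hac = tl a b hab * tl b c hbc * tl a b hab * tl b c hbc := by
  apply LinearEquiv.toLinearMap_injective
  apply LinearMap.ext
  intro v
  show tmap a c v = tmap a b (tmap b c (tmap a b (tmap b c v)))
  have w1b : tmap b c v b = v b := tmap_apply_ne _ _ _ hbc
  have w1a : tmap b c v a = v a := tmap_apply_ne _ _ _ hac
  have w2b : tmap a b (tmap b c v) b = v b + v a := by
    rw [tmap_apply_self, w1b, w1a]
  have w2a : tmap a b (tmap b c v) a = v a := by
    rw [tmap_apply_ne _ _ _ hab, w1a]
  have w2c : tmap a b (tmap b c v) c = v c + v b := by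
    rw [tmap_apply_ne _ _ _ (Ne.symm hbc), tmap_apply_self]
  have w3c : tmap b c (tmap a b (tmap b c v)) c = v c + v a := by
    rw [tmap_apply_self, w2c, w2b, F_aux1]
  have w3b : tmap b c (tmap a b (tmap b c v)) b = v b + v a := by
    rw [tmap_apply_ne _ _ _ hbc, w2b]
  have w3a : tmap b c (tmap a b (tmap b c v)) a = v a := by
    rw [tmap_apply_ne _ _ _ hac, w2a]
  funext i
  by_cases hic : i = c
  · subst hic
    rw [tmap_apply_self, tmap_apply_ne _ _ _ (Ne.symm hbc), w3c]
  · by_cases hib : i = b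
    · subst hib
      rw [tmap_apply_ne _ _ _ hbc, tmap_apply_self, w3b, w3a, F_aux2]
    · rw [tmap_apply_ne _ _ _ hic, tmap_apply_ne _ _ _ hib, tmap_apply_ne _ _ _ hic,
        tmap_apply_ne _ _ _ hib, tmap_apply_ne _ _ _ hic]

lemma nat_cast_ne_zero_I {k : ℕ} (h1 : 1 ≤ k) (h2 : k < 2*e+3) : ((k : ℕ) : I e) ≠ 0 := by
  intro h
  have := natCast_I_val (e := e) k h2
  rw [h, ZMod.val_zero] at this
  omega

/-- all transvections lie in `K2`. -/
lemma tl_mem (a b : I e) (h : a ≠ b) : tl a b h ∈ K2 e := by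
  have key : ∀ k : ℕ, k + 1 < 2*e+3 → ∀ a b : I e, b = a + ((k+1 : ℕ) : I e) →
      (∀ h, tl a b h ∈ K2 e) ∧ (∀ h, tl b a h ∈ K2 e) := by
    intro k
    induction k with
    | zero =>
        intro _ a b hb
        have hb' : b = a + 1 := by rw [hb]; push_cast; ring
        subst hb'
        exact tl_adj a
    | succ k ih =>
        intro hk a b hb
        set c : I e := a + ((k+1 : ℕ) : I e) with hc
        have hcb : b = c + 1 := by rw [hb, hc]; push_cast; ring
        have hknz : ((k+1 : ℕ) : I e) ≠ 0 := nat_cast_ne_zero_I (by omega) (by omega)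
        have hac : a ≠ c := fun hh => hknz (by linear_combination -hh)
        have hcb' : c ≠ b := by rw [hcb]; exact self_ne_add_one c
        obtain ⟨ih1, ih2⟩ := ih (by omega) a c rfl
        have hadj := tl_adj c
        constructor
        · intro h
          rw [tl_comm (b := c) hac hcb' h]
          have h1 := ih1 hac
          have h2 : tl c b hcb' ∈ K2 e := by
            have := hadj.1 (self_ne_add_one c)
            rw [tl_congr _ rfl hcb.symm] at this
            exact this
          exact mul_mem (mul_mem (mul_mem h1 h2) h1) h2
        · intro h
          rw [tl_comm (b := c) (Ne.symm hcb') (Ne.symm hac) h]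
          have h1 : tl b c (Ne.symm hcb') ∈ K2 e := by
            have := hadj.2 (Ne.symm (self_ne_add_one c))
            rw [tl_congr _ hcb.symm rfl] at this
            exact this
          have h2 := ih2 (Ne.symm hac)
          exact mul_mem (mul_mem (mul_mem h1 h2) h1) h2
  have hsub : b - a ≠ 0 := sub_ne_zero_of_ne (Ne.symm h)
  have hval : (b - a).val ≠ 0 := fun hh => hsub (by
    have := ZMod.natCast_rightInverse (n := 2*e+3) (b - a)
    rw [← this, hh, Nat.cast_zero])
  have hlt : (b - a).val < 2*e+3 := ZMod.val_lt _
  obtain ⟨k, hk⟩ : ∃ k, (b - a).val = k + 1 := ⟨(b-a).val - 1, by omega⟩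
  refine (key k (by omega) a b ?_).1 h
  rw [← hk]
  have := ZMod.natCast_rightInverse (n := 2*e+3) (b - a)
  rw [this]
  ring

end ShuffleProof

namespace ShuffleProof

variable {e : ℕ}

/-- from linear automorphisms to matrices -/
def κ (e : ℕ) : (V e ≃ₗ[F] V e) →* Matrix (I e) (I e) F where
  toFun σ := LinearMap.toMatrix' σ.toLinearMap
  map_one' := by
    show LinearMap.toMatrix' (LinearEquiv.refl F (V e)).toLinearMap = 1
    simp [LinearMap.toMatrix'_id]
  map_mul' := by
    intro σ τ
    show LinearMap.toMatrix' (σ.toLinearMap ∘ₗ τ.toLinearMap) = _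
    rw [LinearMap.toMatrix'_comp]

lemma κ_inj : Function.Injective (κ e) := by
  intro σ τ h
  apply LinearEquiv.toLinearMap_injective
  exact LinearMap.toMatrix'.injective h

lemma κ_tl (a b : I e) (h : a ≠ b) : κ e (tl a b h) = Matrix.transvection b a 1 := by
  ext i j
  show LinearMap.toMatrix' (tl a b h).toLinearMap i j = _
  rw [LinearMap.toMatrix'_apply]
  show tmap a b (Pi.single j (1:F)) i = _
  rw [show (Pi.single j (1:F)) = (fun j' => if j' = j then (1:F) else 0) from
    funext fun j' => Pi.single_apply j 1 j']
  by_cases hib : i = b <;> by_cases hja : a = j <;> by_cases hij : i = j <;>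
    simp_all [tmap, Matrix.transvection, Matrix.one_apply, Matrix.single_apply,
      Matrix.add_apply] <;>
    first
      | exact fun hh => h hh.symm
      | rw [if_neg (fun hh => hib hh.symm)]
      | exact fun hh => hib hh.symm

lemma prod_transvec_kappa (L : List (Matrix.TransvectionStruct (I e) F)) :
    ∃ g ∈ K2 e, κ e g = (L.map Matrix.TransvectionStruct.toMatrix).prod := by
  induction L with
  | nil => exact ⟨1, one_mem _, by rw [map_one, List.map_nil, List.prod_nil]⟩
  | cons t L ih =>
      obtain ⟨g, hg, hκ⟩ := ih
      obtain ⟨i, j, hij, c⟩ := t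
      rcases F_cases c with rfl | rfl
      · refine ⟨g, hg, ?_⟩
        rw [List.map_cons, List.prod_cons, hκ]
        show _ = Matrix.transvection i j 0 * _
        rw [Matrix.transvection_zero, one_mul]
      · refine ⟨tl j i (Ne.symm hij) * g, mul_mem (tl_mem j i (Ne.symm hij)) hg, ?_⟩
        rw [List.map_cons, List.prod_cons, map_mul, hκ, κ_tl]
        rfl

lemma isUnit_kappa (σ : V e ≃ₗ[F] V e) : IsUnit (κ e σ) :=
  ⟨⟨κ e σ, κ e σ⁻¹, by rw [← map_mul, mul_inv_cancel, map_one],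
    by rw [← map_mul, inv_mul_cancel, map_one]⟩, rfl⟩

/-- every linear automorphism of `V e` lies in `K2 e`. -/
lemma lin_mem (σ : V e ≃ₗ[F] V e) : σ ∈ K2 e := by
  obtain ⟨L, L', D, hM⟩ :=
    Matrix.Pivot.exists_list_transvec_mul_diagonal_mul_list_transvec (κ e σ)
  obtain ⟨g, hg, hκg⟩ := prod_transvec_kappa (e := e) L
  obtain ⟨g', hg', hκg'⟩ := prod_transvec_kappa (e := e) L'
  rw [← hκg, ← hκg'] at hM
  -- show the diagonal is the identity
  obtain ⟨ug, hug⟩ := isUnit_kappa g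
  obtain ⟨ug', hug'⟩ := isUnit_kappa g'
  have hdiag : Matrix.diagonal D =
      (↑ug⁻¹ : Matrix (I e) (I e) F) * κ e σ * (↑ug'⁻¹ : Matrix (I e) (I e) F) := by
    have h1 := Units.mul_inv_cancel_right ((↑ug : Matrix (I e) (I e) F) * Matrix.diagonal D) ug'
    rw [hM, ← hug, ← hug', mul_assoc (↑ug⁻¹ : Matrix (I e) (I e) F), h1,
      Units.inv_mul_cancel_left]
  have hunit : IsUnit (Matrix.diagonal D) := by
    rw [hdiag]
    exact ((ug⁻¹.isUnit.mul (isUnit_kappa σ)).mul ug'⁻¹.isUnit)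
  have hD : ∀ i, D i = 1 := by
    intro i
    rcases F_cases (D i) with h0 | h1
    · exfalso
      have hdet : IsUnit (Matrix.diagonal D).det := hunit.map Matrix.detMonoidHom
      have hz : (Matrix.diagonal D).det = 0 := by
        rw [Matrix.det_diagonal]
        exact Finset.prod_eq_zero (Finset.mem_univ i) h0
      rw [hz] at hdet
      exact not_isUnit_zero hdet
    · exact h1
  have hD1 : Matrix.diagonal D = 1 := by
    have : D = fun _ => 1 := funext hD
    rw [this, Matrix.diagonal_one]
  rw [hD1, Matrix.mul_one] at hM
  have : σ = g * g' := κ_inj (by rw [map_mul]; exact hM)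
  rw [this]
  exact mul_mem hg hg'

end ShuffleProof

namespace ShuffleProof

variable {e : ℕ}

/-- every affine automorphism decomposes as a translation times its linear part -/
lemma aff_decomp (f : AG e) :
    f = AffineEquiv.constVAdd F (V e) (f 0) * linToAff e f.linear := by
  apply AffineEquiv.toEquiv_injective; apply Equiv.ext; intro v
  show f v = f 0 + f.linear v
  have h := f.map_vadd 0 v
  rw [vadd_eq_add, add_zero] at h
  rw [h, vadd_eq_add, add_comm]

theorem Hgrp_top : Hgrp e = ⊤ := by
  rw [Subgroup.eq_top_iff']
  intro f
  rw [aff_decomp f]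
  exact mul_mem (A1_top (f 0)) (lin_mem f.linear)

end ShuffleProof

namespace ShuffleProof

variable {e : ℕ}

/-! ### the digit equivalence -/

lemma hpow (e : ℕ) : 4 * 2^(2*e+1) = 2^(2*e+3) := by
  rw [show 2*e+3 = (2*e+1)+1+1 by omega, pow_succ, pow_succ]
  ring

def iEquiv (e : ℕ) : I e ≃ Fin (2*e+3) where
  toFun i := ⟨i.val, ZMod.val_lt i⟩
  invFun j := ((j : ℕ) : I e)
  left_inv i := ZMod.natCast_rightInverse i
  right_inv j := by
    apply Fin.ext
    exact natCast_I_val _ j.isLt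

def DE (e : ℕ) : Fin (4 * 2^(2*e+1)) ≃ V e :=
  (finCongr (hpow e)).trans (finFunctionFinEquiv.symm.trans
    (Equiv.arrowCongr (iEquiv e).symm (Equiv.refl F)))

lemma F_val_inj : ∀ a b : F, a.val = b.val → a = b := by decide

lemma DEval (x : Fin (4 * 2^(2*e+1))) (i : I e) :
    DE e x i = ((x.val / 2^(i.val) % 2 : ℕ) : F) := by
  have hv : (DE e x i).val = x.val / 2^(i.val) % 2 := rfl
  apply F_val_inj
  rw [hv, ZMod.val_natCast]
  omega

/-! ### nat bit lemmas -/

lemma bit_low (a b t : ℕ) (hb : b < 4) (ht : 2 ≤ t) :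
    (4*a + b) / 2^t % 2 = a / 2^(t-2) % 2 := by
  have h4 : 2^t = 4 * 2^(t-2) := by
    rw [show t = 2 + (t - 2) by omega, pow_add]
    norm_num
  rw [h4, ← Nat.div_div_eq_div_mul]
  congr 2
  rw [Nat.mul_add_div (by norm_num), Nat.div_eq_of_lt hb, add_zero]

lemma bit_lt2 (a b t : ℕ) (hb : b < 4) (ht : t < 2) :
    (4*a + b) / 2^t % 2 = b / 2^t % 2 := by
  interval_cases t
  · simp only [pow_zero, Nat.div_one]; omega
  · simp only [pow_one]; omega

lemma bit_mod (x s t : ℕ) (h : t < s) : (x % 2^s) / 2^t % 2 = x / 2^t % 2 := by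
  obtain ⟨k, hk⟩ : ∃ k, s - t = k + 1 := ⟨s - t - 1, by omega⟩
  have hs : 2^s = 2^t * (2 * 2^k) := by
    rw [← pow_succ', ← pow_add]
    congr 1
    omega
  conv_rhs => rw [← Nat.div_add_mod x (2^s)]
  generalize x / 2^s = q
  rw [hs, show 2^t * (2*2^k) * q = 2^t * ((2*2^k) * q) by ring,
    Nat.mul_add_div (Nat.two_pow_pos t),
    show (2*2^k)*q = 2*(2^k*q) by ring]
  generalize (x % (2^t * (2*2^k)))/2^t = u
  generalize 2^k * q = w
  omega

lemma bit_div (x s t : ℕ) : (x / 2^s) / 2^t = x / 2^(s+t) := by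
  rw [Nat.div_div_eq_div_mul, pow_add]

lemma bit_addmul_low (c d s t : ℕ) (hc : c < 2^s) (ht : t < s) :
    (c + d * 2^s) / 2^t % 2 = c / 2^t % 2 := by
  rw [← bit_mod (c + d * 2^s) s t ht, Nat.add_mul_mod_self_right, Nat.mod_eq_of_lt hc]

lemma bit_addmul_top (c d s : ℕ) (hc : c < 2^s) :
    (c + d * 2^s) / 2^s = d := by
  rw [Nat.add_mul_div_right _ _ (Nat.two_pow_pos s), Nat.div_eq_of_lt hc,
    zero_add]

end ShuffleProof

namespace ShuffleProof

variable {e : ℕ}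

lemma idx_sub_two_val_ge (i : I e) (h : 2 ≤ i.val) : (i - 2).val = i.val - 2 := by
  have hi : ((i.val : ℕ) : I e) = i := ZMod.natCast_rightInverse i
  have h2 : i - 2 = ((i.val - 2 : ℕ) : I e) := by
    rw [Nat.cast_sub h, hi]
    push_cast
    ring
  rw [h2]
  exact natCast_I_val _ (by have := ZMod.val_lt i; omega)

lemma idx_sub_two_val_lt (i : I e) (h : i.val < 2) : (i - 2).val = i.val + 2*e + 1 := by
  have hi : ((i.val : ℕ) : I e) = i := ZMod.natCast_rightInverse i
  have h0 : ((2*e+3 : ℕ) : I e) = 0 := ZMod.natCast_self _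
  have h2 : i - 2 = ((i.val + 2*e + 1 : ℕ) : I e) := by
    push_cast at h0 ⊢
    rw [hi]
    linear_combination -h0
  rw [h2]
  exact natCast_I_val _ (by omega)

lemma stdShuffle_val (x : Fin (4 * 2^(2*e+1))) :
    (stdShuffle 4 (2^(2*e+1)) x).val = 4 * (x.val % 2^(2*e+1)) + x.val / 2^(2*e+1) := rfl

lemma Raff_apply (v : V e) (i : I e) : Raff e v i = v (i - 2) := rfl

lemma std_corr (x : Fin (4 * 2^(2*e+1))) :
    DE e (stdShuffle 4 (2^(2*e+1)) x) = Raff e (DE e x) := by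
  funext i
  have hx4 : x.val / 2^(2*e+1) < 4 := shuffleAux.div_lt 4 (2^(2*e+1)) x
  have hvi := ZMod.val_lt i
  rw [Raff_apply, DEval, DEval, stdShuffle_val]
  rcases Nat.lt_or_ge i.val 2 with h2 | h2
  · rw [bit_lt2 _ _ _ hx4 h2, idx_sub_two_val_lt i h2, bit_div,
      show 2*e+1 + i.val = i.val + 2*e + 1 from by omega]
  · rw [bit_low _ _ _ hx4 h2, idx_sub_two_val_ge i h2, bit_mod _ _ _ (by omega)]

lemma pilePerm_val (τ : Equiv.Perm (Fin 4)) (x : Fin (4 * 2^(2*e+1))) :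
    (pilePerm 4 (2^(2*e+1)) τ x).val =
      x.val % 2^(2*e+1) +
        (τ ⟨x.val / 2^(2*e+1), shuffleAux.div_lt 4 (2^(2*e+1)) x⟩).val * 2^(2*e+1) := rfl

lemma top_DE (x : Fin (4 * 2^(2*e+1))) :
    topOf (DE e x) = finToPair ⟨x.val / 2^(2*e+1), shuffleAux.div_lt 4 (2^(2*e+1)) x⟩ := by
  have hx4 : x.val / 2^(2*e+1) < 4 := shuffleAux.div_lt 4 (2^(2*e+1)) x
  unfold topOf finToPair
  have hA : (DE e x) (-2) = ((x.val / 2^(2*e+1) % 2 : ℕ) : F) := by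
    rw [DEval, val_topA]
  have hB : (DE e x) (-1) = ((x.val / 2^(2*e+1) / 2 : ℕ) : F) := by
    rw [DEval, val_topB]
    have h1 : x.val / 2^(2*e+1) / 2 = x.val / 2^(2*e+2) := by
      rw [Nat.div_div_eq_div_mul, ← pow_succ]
    have h2 : x.val / 2^(2*e+2) < 2 := by
      apply Nat.div_lt_of_lt_mul
      calc x.val < 4 * 2^(2*e+1) := x.isLt
        _ = 2 ^ (2*e+2) * 2 := by
            rw [show 2*e+2 = (2*e+1)+1 by omega, pow_succ]
            ring
    rw [h1, Nat.mod_eq_of_lt h2]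
  rw [hA, hB]

lemma pile_corr (τ : Equiv.Perm (Fin 4)) (x : Fin (4 * 2^(2*e+1))) :
    DE e (pilePerm 4 (2^(2*e+1)) τ x) = gaff (e := e) τ (DE e x) := by
  set j : Fin 4 := ⟨x.val / 2^(2*e+1), shuffleAux.div_lt 4 (2^(2*e+1)) x⟩ with hj
  have hxmod : x.val % 2^(2*e+1) < 2^(2*e+1) := Nat.mod_lt _ (Nat.two_pow_pos _)
  have hτj : (τ j).val < 4 := (τ j).isLt
  have hf4 : f4 τ (finToPair j) = finToPair (τ j) := by
    rw [f4, fp_rt]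
  funext i
  show DE e (pilePerm 4 (2^(2*e+1)) τ x) i = gmap τ (DE e x) i
  rcases I_trichotomy i with h | h | h
  · rw [gmap, top_DE, setTop_low _ _ (low_ne_topA h) (low_ne_topB h), DEval, DEval,
      pilePerm_val, ← hj, bit_addmul_low _ _ _ _ hxmod h, bit_mod _ _ _ h]
  · subst h
    rw [gmap, top_DE, setTop_topA, hf4, DEval, val_topA, pilePerm_val, ← hj]
    show ((_ : ℕ) : F) = ((τ j).val % 2 : ℕ)
    congr 1
    rw [bit_addmul_top _ _ _ hxmod]
  · subst h
    rw [gmap, top_DE, setTop_topB, hf4, DEval, val_topB, pilePerm_val, ← hj]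
    show ((_ : ℕ) : F) = ((τ j).val / 2 : ℕ)
    have h1 : (x.val % 2^(2*e+1) + (τ j).val * 2^(2*e+1)) / 2^(2*e+2) = (τ j).val / 2 := by
      rw [show (2:ℕ)^(2*e+2) = 2^(2*e+1)*2 from by rw [← pow_succ],
        ← Nat.div_div_eq_div_mul, bit_addmul_top _ _ _ hxmod]
    rw [h1, Nat.mod_eq_of_lt (by omega)]

end ShuffleProof

namespace ShuffleProof

variable {e : ℕ}

def permCongrHom {α β : Type} (E : α ≃ β) : Equiv.Perm α ≃* Equiv.Perm β where
  toFun p := E.permCongr p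
  invFun q := E.symm.permCongr q
  left_inv p := by ext a; simp [Equiv.permCongr_apply]
  right_inv q := by ext b; simp [Equiv.permCongr_apply]
  map_mul' p q := by ext b; simp [Equiv.permCongr_apply, Equiv.Perm.mul_apply]

def affToPerm (e : ℕ) : AG e →* Equiv.Perm (V e) :=
  MonoidHom.mk' (fun f => f.toEquiv) (fun _ _ => rfl)

lemma affToPerm_inj : Function.Injective (affToPerm e) :=
  fun _ _ h => AffineEquiv.toEquiv_injective h

lemma image_gens :
    ⇑(permCongrHom (DE e)) '' ({stdShuffle 4 (2^(2*e+1))} ∪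
        Set.range (pilePerm 4 (2^(2*e+1)))) = ⇑(affToPerm e) '' (Tset e) := by
  rw [Tset, Set.image_union, Set.image_singleton, Set.image_union, Set.image_singleton]
  congr 1
  · congr 1
    apply Equiv.ext
    intro v
    show DE e (stdShuffle 4 (2^(2*e+1)) ((DE e).symm v)) = Raff e v
    rw [std_corr, Equiv.apply_symm_apply]
  · have hfun : (⇑(permCongrHom (DE e)) ∘ pilePerm 4 (2^(2*e+1))) =
        (⇑(affToPerm e) ∘ gaff (e := e)) := by
      funext τ
      show (permCongrHom (DE e)) (pilePerm 4 (2^(2*e+1)) τ) = affToPerm e (gaff τ)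
      apply Equiv.ext
      intro v
      show DE e (pilePerm 4 (2^(2*e+1)) τ ((DE e).symm v)) = gaff (e := e) τ v
      rw [pile_corr, Equiv.apply_symm_apply]
    rw [← Set.range_comp, ← Set.range_comp, hfun]

theorem map_shuffle :
    Subgroup.map (permCongrHom (DE e) : Equiv.Perm (Fin (4 * 2^(2*e+1))) →* Equiv.Perm (V e))
      (shuffleGroup 4 (2^(2*e+1))) = (affToPerm e).range := by
  rw [shuffleGroup, MonoidHom.map_closure]
  have himg : ⇑(permCongrHom (DE e) :
      Equiv.Perm (Fin (4 * 2^(2*e+1))) →* Equiv.Perm (V e)) '' ({stdShuffle 4 (2^(2*e+1))} ∪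
        Set.range (pilePerm 4 (2^(2*e+1)))) = ⇑(affToPerm e) '' (Tset e) := image_gens
  rw [himg, ← MonoidHom.map_closure]
  have : Subgroup.closure (Tset e) = (⊤ : Subgroup (AG e)) := Hgrp_top
  rw [this, ← MonoidHom.range_eq_map]

def reindexLin (e : ℕ) : V e ≃ₗ[F] (Fin (2*e+3) → F) :=
  LinearEquiv.funCongrLeft F F (iEquiv e).symm

def affCongr (e : ℕ) : AG e ≃* ((Fin (2*e+3) → F) ≃ᵃ[F] (Fin (2*e+3) → F)) where
  toFun f := ((reindexLin e).symm.toAffineEquiv.trans f).trans (reindexLin e).toAffineEquiv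
  invFun g := ((reindexLin e).toAffineEquiv.trans g).trans (reindexLin e).symm.toAffineEquiv
  left_inv f := by
    ext v
    simp [AffineEquiv.trans_apply]
  right_inv g := by
    ext v
    simp [AffineEquiv.trans_apply]
  map_mul' a b := by
    apply AffineEquiv.toEquiv_injective
    apply Equiv.ext
    intro v
    show (reindexLin e) ((a * b) ((reindexLin e).symm v)) =
      (reindexLin e) (a ((reindexLin e).symm ((reindexLin e) (b ((reindexLin e).symm v)))))
    rw [LinearEquiv.symm_apply_apply]
    rfl

theorem main_iso (e : ℕ) :
    Nonempty ((shuffleGroup 4 (2^(2*e+1))) ≃*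
      ((Fin (2*e+3) → ZMod 2) ≃ᵃ[ZMod 2] (Fin (2*e+3) → ZMod 2))) := by
  refine ⟨?_⟩
  exact ((((permCongrHom (DE e)).subgroupMap (shuffleGroup 4 (2^(2*e+1)))).trans
    (MulEquiv.subgroupCongr map_shuffle)).trans
      (MonoidHom.ofInjective affToPerm_inj).symm).trans (affCongr e)

end ShuffleProof

theorem shuffleGroup_four_iso_affine (e : ℕ) (he : 1 ≤ e) :
    Nonempty ((shuffleGroup 4 (2 ^ (2 * e - 1))) ≃*
      ((Fin (2 * e + 1) → ZMod 2) ≃ᵃ[ZMod 2] (Fin (2 * e + 1) → ZMod 2))) := by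
  obtain ⟨e', rfl⟩ : ∃ e', e = e' + 1 := ⟨e - 1, by omega⟩
  have h1 : 2 * (e' + 1) - 1 = 2 * e' + 1 := by omega
  have h2 : 2 * (e' + 1) + 1 = 2 * e' + 3 := by omega
  rw [h1, h2]
  exact ShuffleProof.main_iso e'
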